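/- arXiv:1012.3147 — 4 statements merged into one kernel-verified Lean document; each statement's English description precedes it below -/
import Mathlib

section
/- The polynomial system p₁ = x₁²+x₂²−1, p₂ = x₃²+x₄²−1, p₃ = (1+x₁)²+x₂²−2, p₄ = (1+x₃)²+x₄²−2, p₅ = (1+x₁x₃+x₂x₄)²+(x₁x₄−x₂x₃)²−2 satisfies the polynomial identity r₁p₁ + r₂p₂ + r₃p₃ + r₄p₄ + r₅p₅ = 1, where r₁ = (1/2)(−x₁−2x₄²+x₁x₃²+x₂x₃x₄−x₂x₃²x₄−x₂x₄³), r₂ = (1/2)(−2−x₃+2x₁²−x₂x₄), r₃ = (1/2)(x₁−x₁x₃²−x₂x₃x₄), r₄ = (1/2)x₃, r₅ = (1/2)x₂x₄. -/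
open MvPolynomial

theorem stmt_10 :
    let x : Fin 4 → MvPolynomial (Fin 4) ℝ := fun i => X i
    let p₁ := x 0 ^ 2 + x 1 ^ 2 - 1
    let p₂ := x 2 ^ 2 + x 3 ^ 2 - 1
    let p₃ := (1 + x 0) ^ 2 + x 1 ^ 2 - 2
    let p₄ := (1 + x 2) ^ 2 + x 3 ^ 2 - 2
    let p₅ := (1 + x 0 * x 2 + x 1 * x 3) ^ 2 + (x 0 * x 3 - x 1 * x 2) ^ 2 - 2
    let r₁ := (C (1 / 2 : ℝ) : MvPolynomial (Fin 4) ℝ) *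
      (-x 0 - 2 * x 3 ^ 2 + x 0 * x 2 ^ 2 + x 1 * x 2 * x 3 - x 1 * x 2 ^ 2 * x 3 - x 1 * x 3 ^ 3)
    let r₂ := (C (1 / 2 : ℝ) : MvPolynomial (Fin 4) ℝ) * (-2 - x 2 + 2 * x 0 ^ 2 - x 1 * x 3)
    let r₃ := (C (1 / 2 : ℝ) : MvPolynomial (Fin 4) ℝ) * (x 0 - x 0 * x 2 ^ 2 - x 1 * x 2 * x 3)
    let r₄ := (C (1 / 2 : ℝ) : MvPolynomial (Fin 4) ℝ) * x 2
    let r₅ := (C (1 / 2 : ℝ) : MvPolynomial (Fin 4) ℝ) * (x 1 * x 3)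
    r₁ * p₁ + r₂ * p₂ + r₃ * p₃ + r₄ * p₄ + r₅ * p₅ = 1 := by
  intro x p₁ p₂ p₃ p₄ p₅ r₁ r₂ r₃ r₄ r₅
  have h : (2 : MvPolynomial (Fin 4) ℝ) * C (1 / 2 : ℝ) = 1 := by
    rw [← map_ofNat (C : ℝ →+* MvPolynomial (Fin 4) ℝ) 2, ← C_mul]
    norm_num
  linear_combination h
end

section
/- There are no real numbers x₁, x₂, x₃, x₄ simultaneously satisfying x₁²+x₂² = 1, x₃²+x₄² = 1, (1+x₁)²+x₂² = 2, (1+x₃)²+x₄² = 2, and (1+x₁x₃+x₂x₄)²+(x₁x₄−x₂x₃)² = 2. -/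
theorem stmt_11 :
    ¬ ∃ x₁ x₂ x₃ x₄ : ℝ,
      x₁ ^ 2 + x₂ ^ 2 = 1 ∧
      x₃ ^ 2 + x₄ ^ 2 = 1 ∧
      (1 + x₁) ^ 2 + x₂ ^ 2 = 2 ∧
      (1 + x₃) ^ 2 + x₄ ^ 2 = 2 ∧
      (1 + x₁ * x₃ + x₂ * x₄) ^ 2 + (x₁ * x₄ - x₂ * x₃) ^ 2 = 2 := by
  rintro ⟨x₁, x₂, x₃, x₄, h1, h2, h3, h4, h5⟩
  have e1 : x₁ = 0 := by nlinarith
  have e3 : x₃ = 0 := by nlinarith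
  subst e1 e3
  have h1' : x₂ ^ 2 = 1 := by nlinarith
  have h2' : x₄ ^ 2 = 1 := by nlinarith
  have t2 : (x₂ * x₄) ^ 2 = 1 := by rw [mul_pow, h1', h2']; norm_num
  nlinarith [sq_nonneg (x₂ * x₄ - 1), sq_nonneg (x₂ * x₄ + 1)]
end

section
/- There do not exist four unit vectors v₁ = (1,0), v₂ = (1,1)/√2, v₃ = (1, z)/√2, v₄ = (1, w)/√2 in ℂ² (with |z| = |w| = 1) that are pairwise mutually unbiased, i.e., such that |⟨v_i|v_j⟩|² = 1/2 for all i ≠ j. -/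
noncomputable section

/-- The four candidate vectors in ℂ². -/
def muVecs (z w : ℂ) : Fin 4 → (Fin 2 → ℂ)
  | 0 => ![1, 0]
  | 1 => (1 / Real.sqrt 2 : ℂ) • ![1, 1]
  | 2 => (1 / Real.sqrt 2 : ℂ) • ![1, z]
  | 3 => (1 / Real.sqrt 2 : ℂ) • ![1, w]

/-- Standard Hermitian inner product on ℂ². -/
def herm (u v : Fin 2 → ℂ) : ℂ := ∑ i, star (u i) * v i

theorem stmt_12 :
    ¬ ∃ z w : ℂ, ‖z‖ = 1 ∧ ‖w‖ = 1 ∧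
      ∀ i j : Fin 4, i ≠ j →
        ‖herm (muVecs z w i) (muVecs z w j)‖ ^ 2 = 1 / 2 := by
  rintro ⟨z, w, hz, hw, h⟩
  have h2 : Real.sqrt 2 * Real.sqrt 2 = 2 := Real.mul_self_sqrt (by norm_num)
  have e12 : herm (muVecs z w 1) (muVecs z w 2) = (1/2) * (1 + z) := by
    simp [muVecs, herm, Fin.sum_univ_two, Complex.ext_iff]
    constructor
    · linear_combination ((1 + z.re)/4) * h2
    · linear_combination (z.im/4) * h2
  have e13 : herm (muVecs z w 1) (muVecs z w 3) = (1/2) * (1 + w) := by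
    simp [muVecs, herm, Fin.sum_univ_two, Complex.ext_iff]
    constructor
    · linear_combination ((1 + w.re)/4) * h2
    · linear_combination (w.im/4) * h2
  have e23 : herm (muVecs z w 2) (muVecs z w 3) = (1/2) * (1 + star z * w) := by
    simp [muVecs, herm, Fin.sum_univ_two, Complex.ext_iff]
    constructor
    · linear_combination ((1 + z.re * w.re + z.im * w.im)/4) * h2
    · linear_combination ((z.re * w.im - z.im * w.re)/4) * h2
  have h12 := h 1 2 (by decide); rw [e12, Complex.sq_norm] at h12
  have h13 := h 1 3 (by decide); rw [e13, Complex.sq_norm] at h13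
  have h23 := h 2 3 (by decide); rw [e23, Complex.sq_norm] at h23
  have hz' : z.re ^ 2 + z.im ^ 2 = 1 := by
    have := Complex.sq_norm z; rw [hz] at this
    simpa [Complex.normSq_apply, sq] using this.symm
  have hw' : w.re ^ 2 + w.im ^ 2 = 1 := by
    have := Complex.sq_norm w; rw [hw] at this
    simpa [Complex.normSq_apply, sq] using this.symm
  simp only [Complex.normSq_apply, Complex.add_re, Complex.add_im, Complex.mul_re,
    Complex.mul_im, Complex.one_re, Complex.one_im, Complex.ofReal_re, Complex.ofReal_im,
    Complex.star_def, Complex.conj_re, Complex.conj_im, Complex.div_re, Complex.div_im] at h12 h13 h23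
  norm_num at h12 h13 h23
  have hzre : z.re = 0 := by linear_combination 2*h12 - (1/2)*hz'
  have hwre : w.re = 0 := by linear_combination 2*h13 - (1/2)*hw'
  have hzim : z.im * z.im = 1 := by linear_combination hz' - z.re * hzre
  have hwim : w.im * w.im = 1 := by linear_combination hw' - w.re * hwre
  rcases mul_self_eq_one_iff.mp hzim with hzi | hzi <;>
    rcases mul_self_eq_one_iff.mp hwim with hwi | hwi <;>
      rw [hzre, hwre, hzi, hwi] at h23 <;> norm_num at h23

end
end

section
/- If a symmetric positive semidefinite N×N real matrix G and a symmetric matrix W with 0 ≼ W ≼ I and tr(W) = N − n satisfy tr(GW) = 0, then rank(G) ≤ n. -/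
open Matrix

lemma trace_transpose_mul_self_eq_zero {m n : Type*} [Fintype m] [Fintype n]
    {A : Matrix m n ℝ} (h : (Aᵀ * A).trace = 0) : A = 0 := by
  have h' : ∑ j, ∑ i, A i j * A i j = 0 := by
    simpa [Matrix.trace, Matrix.mul_apply, Matrix.diag] using h
  ext i j
  have h1 := (Finset.sum_eq_zero_iff_of_nonneg
    (fun j _ => Finset.sum_nonneg (fun i _ => mul_self_nonneg (A i j)))).mp h' j (by simp)
  have h2 := (Finset.sum_eq_zero_iff_of_nonneg
    (fun i _ => mul_self_nonneg (A i j))).mp h1 i (by simp)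
  simpa [mul_self_eq_zero] using h2

theorem stmt_16 (N n : ℕ) (hn : n ≤ N) (G W : Matrix (Fin N) (Fin N) ℝ)
    (hG : G.PosSemidef) (hW : W.PosSemidef) (hW1 : (1 - W).PosSemidef)
    (hWtr : W.trace = (N : ℝ) - n) (h0 : (G * W).trace = 0) :
    G.rank ≤ n := by
  classical
  open scoped MatrixOrder in
  set P := CFC.sqrt G with hP
  open scoped MatrixOrder in
  set Q := CFC.sqrt W with hQ
  open scoped MatrixOrder in
  have hPh : Pᵀ = P := (CFC.sqrt_nonneg G).posSemidef.1
  open scoped MatrixOrder in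
  have hQh : Qᵀ = Q := (CFC.sqrt_nonneg W).posSemidef.1
  open scoped MatrixOrder in
  have hPP : P * P = G := CFC.sqrt_mul_sqrt_self G hG.nonneg
  open scoped MatrixOrder in
  have hQQ : Q * Q = W := CFC.sqrt_mul_sqrt_self W hW.nonneg
  have e2 : P * (P * Q) * Q = G * W := by
    simp only [← Matrix.mul_assoc]
    rw [hPP, Matrix.mul_assoc, hQQ]
  have htr0 : ((P * Q)ᵀ * (P * Q)).trace = 0 := by
    have e1 : (P * Q)ᵀ * (P * Q) = Q * (P * (P * Q)) := by
      rw [Matrix.transpose_mul, hPh, hQh, Matrix.mul_assoc]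
    rw [e1, Matrix.trace_mul_comm, e2]
    exact h0
  have hPQ : P * Q = 0 := trace_transpose_mul_self_eq_zero htr0
  have hGW : G * W = 0 := by
    rw [← e2, hPQ, Matrix.mul_zero, Matrix.zero_mul]
  have hWt : Wᵀ = W := hW.1
  have hGt : Gᵀ = G := hG.1
  have hWG : W * G = 0 := by
    have h3 := congrArg Matrix.transpose hGW
    rwa [Matrix.transpose_mul, hWt, hGt, Matrix.transpose_zero] at h3
  have hrk : W.rank + G.rank ≤ N := by
    simpa using Matrix.rank_add_rank_le_card_of_mul_eq_zero hWG
  have htrW : W.trace = ∑ i, hW.1.eigenvalues i := by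
    simpa using hW.1.trace_eq_sum_eigenvalues
  have hle1 : ∀ i, hW.1.eigenvalues i ≤ 1 := by
    intro i
    have hv := hW1.dotProduct_mulVec_nonneg (⇑(hW.1.eigenvectorBasis i))
    have hunit : dotProduct (star (⇑(hW.1.eigenvectorBasis i)))
        (⇑(hW.1.eigenvectorBasis i)) = 1 := by
      have hnorm : ‖hW.1.eigenvectorBasis i‖ = 1 := hW.1.eigenvectorBasis.orthonormal.1 i
      have h2 : (inner ℝ (hW.1.eigenvectorBasis i) (hW.1.eigenvectorBasis i) : ℝ) = 1 := by
        rw [real_inner_self_eq_norm_sq, hnorm]; norm_num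
      rw [EuclideanSpace.inner_eq_star_dotProduct, dotProduct_comm] at h2
      exact h2
    have hlam : hW.1.eigenvalues i = dotProduct (star (⇑(hW.1.eigenvectorBasis i)))
        (W *ᵥ ⇑(hW.1.eigenvectorBasis i)) := by
      simpa using hW.1.eigenvalues_eq i
    rw [Matrix.sub_mulVec, Matrix.one_mulVec, dotProduct_sub, hunit, ← hlam] at hv
    linarith
  have hge0 : ∀ i, 0 ≤ hW.1.eigenvalues i := fun i => hW.eigenvalues_nonneg i
  have hsum_le : ∑ i, hW.1.eigenvalues i
      ≤ ∑ i, (if hW.1.eigenvalues i ≠ 0 then (1:ℝ) else 0) := by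
    apply Finset.sum_le_sum
    intro i _
    by_cases hz : hW.1.eigenvalues i = 0
    · simp [hz]
    · simp [hz, hle1 i]
  have hcard : ∑ i, (if hW.1.eigenvalues i ≠ 0 then (1:ℝ) else 0)
      = (Fintype.card {i // hW.1.eigenvalues i ≠ 0} : ℝ) := by
    rw [Finset.sum_boole, Fintype.card_subtype]
  have hrankW : (N : ℝ) - n ≤ (W.rank : ℝ) := by
    rw [hW.1.rank_eq_card_non_zero_eigs]
    calc (N : ℝ) - n = W.trace := hWtr.symm
    _ = ∑ i, hW.1.eigenvalues i := htrW
    _ ≤ _ := hsum_le.trans_eq hcard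
  have hN : N ≤ W.rank + n := by
    have : (N : ℝ) ≤ (W.rank : ℝ) + n := by linarith
    exact_mod_cast this
  omega
end
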